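/- Unbounded-insertion case (r = ∞): for every n ≥ 1, the set D(n) of strings in S_q(n) that contain no run of ℓ or more consecutive zeros is a zero-error code for the (ℓ,∞)-0-insertion channel, and every zero-error code C ⊆ S_q(n) for this channel satisfies |C| ≤ |D(n)|. -/

import Mathlib

namespace ZeroErrorDup

/-- Output relation of the (ℓ,∞)-0-insertion channel: after each input symbol an
arbitrary number of copies of the block `0^ℓ` is inserted. -/
inductive IsOutputInf (ℓ : ℕ) : List ℕ → List ℕ → Prop
  | nil : IsOutputInf ℓ [] []
  | cons (a : ℕ) (c : ℕ) {x y : List ℕ} :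
      IsOutputInf ℓ x y → IsOutputInf ℓ (a :: x) (a :: (List.replicate (c * ℓ) 0 ++ y))

/-- Two strings are confusable if some string is an output of both. -/
def ConfusableInf (ℓ : ℕ) (x y : List ℕ) : Prop :=
  ∃ z, IsOutputInf ℓ x z ∧ IsOutputInf ℓ y z

/-- A set of strings is a zero-error code if every two distinct elements are
non-confusable. -/
def ZeroErrorCodeInf (ℓ : ℕ) (C : Set (List ℕ)) : Prop :=
  ∀ x ∈ C, ∀ y ∈ C, x ≠ y → ¬ ConfusableInf ℓ x y

/-- `S q n`: strings over `A_q` of length between 1 and `n` whose first symbol is nonzero. -/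
def S (q n : ℕ) : Set (List ℕ) :=
  { x | x ≠ [] ∧ x.length ≤ n ∧ (∀ a ∈ x, a < q) ∧ x.headI ≠ 0 }

/-- `D q ℓ n`: strings in `S q n` containing no run of `ℓ` (or more) consecutive zeros. -/
def D (q ℓ n : ℕ) : Set (List ℕ) :=
  { x | x ∈ S q n ∧ ¬ (List.replicate ℓ 0 <:+: x) }

/-- Reduction: greedily remove blocks of `ℓ` consecutive zeros from the left. -/
def red (ℓ : ℕ) : List ℕ → List ℕ
  | [] => []
  | a :: x =>
      if a = 0 ∧ List.replicate (ℓ - 1) 0 <+: x then red ℓ (x.drop (ℓ - 1))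
      else a :: red ℓ x
termination_by l => l.length
decreasing_by
  · simp only [List.length_drop, List.length_cons]; omega
  · simp [Nat.lt_succ_iff]

lemma red_nil (ℓ : ℕ) : red ℓ [] = [] := by simp [red]

lemma red_cons_pos {ℓ a : ℕ} {x : List ℕ} (h : a = 0 ∧ List.replicate (ℓ - 1) 0 <+: x) :
    red ℓ (a :: x) = red ℓ (x.drop (ℓ - 1)) := by
  rw [red, if_pos h]

lemma red_cons_neg {ℓ a : ℕ} {x : List ℕ} (h : ¬ (a = 0 ∧ List.replicate (ℓ - 1) 0 <+: x)) :
    red ℓ (a :: x) = a :: red ℓ x := by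
  rw [red, if_neg h]


lemma rep_succ' {ℓ : ℕ} (hℓ : 1 ≤ ℓ) :
    List.replicate ℓ (0:ℕ) = 0 :: List.replicate (ℓ - 1) 0 := by
  conv_lhs => rw [show ℓ = 1 + (ℓ - 1) by omega]
  rw [List.replicate_add, List.replicate_one, List.singleton_append]

lemma prefix_drop_decomp {k : ℕ} {x : List ℕ} (h : List.replicate k (0:ℕ) <+: x) :
    x = List.replicate k 0 ++ x.drop k := by
  obtain ⟨s, hs⟩ := h
  have hd : x.drop k = s := by rw [← hs, List.drop_left' (by simp)]
  rw [hd, hs]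

lemma rep_prefix_rep_append {k m : ℕ} (h : k ≤ m) (r : List ℕ) :
    List.replicate k (0:ℕ) <+: List.replicate m 0 ++ r := by
  rw [show m = k + (m - k) by omega, List.replicate_add, List.append_assoc]
  exact List.prefix_append _ _

lemma block_cons_decomp {ℓ a : ℕ} {x : List ℕ} (hℓ : 1 ≤ ℓ)
    (h : a = 0 ∧ List.replicate (ℓ - 1) 0 <+: x) :
    a :: x = List.replicate ℓ 0 ++ x.drop (ℓ - 1) := by
  rw [h.1, rep_succ' hℓ, List.cons_append]
  congr 1
  exact prefix_drop_decomp h.2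

lemma outMono {ℓ : ℕ} {x z : List ℕ} (m : ℕ) (h : IsOutputInf ℓ x z) :
    IsOutputInf ℓ (List.replicate m 0 ++ x) (List.replicate m 0 ++ z) := by
  induction m with
  | zero => simpa using h
  | succ m ih =>
      have := IsOutputInf.cons 0 0 ih
      simpa [List.replicate_succ] using this

lemma join {ℓ : ℕ} {u x y : List ℕ} (h1 : IsOutputInf ℓ u x) (h2 : IsOutputInf ℓ u y) :
    ∃ z, IsOutputInf ℓ x z ∧ IsOutputInf ℓ y z := by
  induction h1 generalizing y with
  | nil => cases h2; exact ⟨[], .nil, .nil⟩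
  | @cons a c x' w hx ih =>
      cases h2 with
      | cons _ d hy =>
          rename_i y'
          obtain ⟨z, hxz, hyz⟩ := ih hy
          refine ⟨a :: (List.replicate (d * ℓ) 0 ++ (List.replicate (c * ℓ) 0 ++ z)), ?_, ?_⟩
          · exact IsOutputInf.cons a d (outMono (c * ℓ) hxz)
          · have := IsOutputInf.cons a c (outMono (d * ℓ) hyz)
            have hre : List.replicate (c * ℓ) 0 ++ (List.replicate (d * ℓ) 0 ++ z)
                = List.replicate (d * ℓ) 0 ++ (List.replicate (c * ℓ) 0 ++ z) := by
              rw [← List.append_assoc, ← List.append_assoc, ← List.replicate_add,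
                ← List.replicate_add, Nat.add_comm]
            rw [hre] at this
            exact this

lemma red_rep_block {ℓ : ℕ} (hℓ : 1 ≤ ℓ) (c : ℕ) (v : List ℕ) :
    red ℓ (List.replicate (c * ℓ) 0 ++ v) = red ℓ v := by
  induction c with
  | zero => simp
  | succ c ih =>
      have h1 : (c + 1) * ℓ = ℓ + c * ℓ := by rw [Nat.succ_mul]; omega
      rw [h1, List.replicate_add, List.append_assoc, rep_succ' hℓ, List.cons_append]
      rw [red_cons_pos ⟨rfl, List.prefix_append _ _⟩]
      rw [List.drop_left' (by simp)]
      exact ih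

lemma prefix_of_prefix_red {ℓ : ℕ} (hℓ : 1 ≤ ℓ) :
    ∀ (t : List ℕ) {k : ℕ}, List.replicate k 0 <+: red ℓ t → List.replicate k 0 <+: t := by
  intro t
  induction t using red.induct ℓ with
  | case1 => intro k h; rw [red_nil] at h
             have := h.length_le; simp at this; simp [this]
  | case2 a x h ih =>
      intro k hk
      rw [red_cons_pos h] at hk
      obtain ⟨r, hr⟩ := (ih hk)
      have hx : a :: x = List.replicate (ℓ + k) 0 ++ r := by
        rw [block_cons_decomp hℓ h, ← hr, ← List.append_assoc, ← List.replicate_add]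
      rw [hx]
      exact rep_prefix_rep_append (by omega) r
  | case3 a x h ih =>
      intro k hk
      rw [red_cons_neg h] at hk
      match k with
      | 0 => simp
      | k + 1 =>
          rw [List.replicate_succ] at hk ⊢
          rw [List.cons_prefix_cons] at hk ⊢
          exact ⟨hk.1, ih hk.2⟩

lemma not_infix_red {ℓ : ℕ} (hℓ : 1 ≤ ℓ) :
    ∀ t : List ℕ, ¬ (List.replicate ℓ 0 <:+: red ℓ t) := by
  intro t
  induction t using red.induct ℓ with
  | case1 => rw [red_nil]; simp [List.infix_nil, List.replicate_eq_nil_iff]; omega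
  | case2 a x h ih => rw [red_cons_pos h]; exact ih
  | case3 a x h ih =>
      rw [red_cons_neg h]
      intro hinf
      rcases List.infix_cons_iff.mp hinf with hpre | hinf'
      · have hrep : List.replicate ℓ 0 = 0 :: List.replicate (ℓ - 1) 0 := by
          have : ℓ = 1 + (ℓ - 1) := by omega
          rw [this]; simp [List.replicate_add]
        rw [hrep, List.cons_prefix_cons] at hpre
        exact h ⟨hpre.1.symm, prefix_of_prefix_red hℓ x hpre.2⟩
      · exact ih hinf'

lemma red_eq_self {ℓ : ℕ} (hℓ : 1 ≤ ℓ) :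
    ∀ t : List ℕ, ¬ (List.replicate ℓ 0 <:+: t) → red ℓ t = t := by
  intro t
  induction t using red.induct ℓ with
  | case1 => intros; rw [red_nil]
  | case2 a x h ih =>
      intro hni
      exfalso
      apply hni
      refine List.IsPrefix.isInfix ?_
      have : ℓ = 1 + (ℓ - 1) := by omega
      rw [this, List.replicate_add, List.replicate_one, List.singleton_append,
        List.cons_prefix_cons]
      exact ⟨h.1.symm, h.2⟩
  | case3 a x h ih =>
      intro hni
      rw [red_cons_neg h, ih (fun hi => hni (hi.trans (List.suffix_cons a x).isInfix))]
/- nb: need infix of x implies infix of a::x -/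

lemma red_idem {ℓ : ℕ} (hℓ : 1 ≤ ℓ) (t : List ℕ) : red ℓ (red ℓ t) = red ℓ t :=
  red_eq_self hℓ _ (not_infix_red hℓ t)

/-- head-nonzero (or empty) predicate -/
def Z (r : List ℕ) : Prop := r = [] ∨ r.headI ≠ 0

lemma red_cons_nz {ℓ a : ℕ} (ha : a ≠ 0) (x : List ℕ) : red ℓ (a :: x) = a :: red ℓ x :=
  red_cons_neg (by tauto)

lemma Z_red {ℓ : ℕ} {r : List ℕ} (h : Z r) : Z (red ℓ r) := by
  rcases h with h | h
  · subst h; rw [red_nil]; left; rfl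
  · match r with
    | [] => rw [red_nil]; left; rfl
    | a :: x =>
        simp only [List.headI] at h
        rw [red_cons_nz h]
        right; exact h

lemma red_run_small {ℓ : ℕ} (hℓ : 1 ≤ ℓ) :
    ∀ (m : ℕ), m < ℓ → ∀ (r : List ℕ), Z r →
      red ℓ (List.replicate m 0 ++ r) = List.replicate m 0 ++ red ℓ r := by
  intro m
  induction m with
  | zero => intros; simp
  | succ m ih =>
      intro hm r hr
      rw [List.replicate_succ, List.cons_append]
      have hneg : ¬ ((0:ℕ) = 0 ∧ List.replicate (ℓ - 1) (0:ℕ) <+: List.replicate m 0 ++ r) := by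
        rintro ⟨-, hpre⟩
        obtain ⟨u, hu⟩ := hpre
        have hdrop : r = List.replicate (ℓ - 1 - m) 0 ++ u := by
          have h1 : (List.replicate m (0:ℕ) ++ r).drop m = r := List.drop_left' (by simp)
          have h2 : (List.replicate (ℓ - 1) (0:ℕ) ++ u).drop m
              = List.replicate (ℓ - 1 - m) 0 ++ u := by
            rw [List.drop_append_of_le_length (by simp; omega), List.drop_replicate]
          rw [hu, h1] at h2
          exact h2
        have hpos : 1 ≤ ℓ - 1 - m := by omega
        rcases hr with h | h
        · rw [h] at hdrop
          have := congrArg List.length hdrop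
          simp at this; omega
        · apply h
          rw [hdrop]
          have : ℓ - 1 - m = 1 + (ℓ - 1 - m - 1) := by omega
          rw [this, List.replicate_add, List.replicate_one]
          rfl
      rw [red_cons_neg hneg, ih (by omega) r hr, List.cons_append]

lemma red_run {ℓ : ℕ} (hℓ : 1 ≤ ℓ) (m : ℕ) (r : List ℕ) (hr : Z r) :
    red ℓ (List.replicate m 0 ++ r) = List.replicate (m % ℓ) 0 ++ red ℓ r := by
  induction m using Nat.strong_induction_on with
  | _ m ih =>
      by_cases hm : m < ℓ
      · rw [Nat.mod_eq_of_lt hm]; exact red_run_small hℓ m hm r hr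
      · push_neg at hm
        have h1 : m = 1 * ℓ + (m - ℓ) := by omega
        rw [h1, List.replicate_add, List.append_assoc, red_rep_block hℓ,
          ih (m - ℓ) (by omega)]
        congr 2
        conv_rhs => rw [show 1 * ℓ + (m - ℓ) = (m - ℓ) + ℓ by omega, Nat.add_mod_right]

lemma exists_run_decomp (w : List ℕ) :
    ∃ m r, w = List.replicate m 0 ++ r ∧ Z r := by
  induction w with
  | nil => exact ⟨0, [], by simp, Or.inl rfl⟩
  | cons a x ih =>
      by_cases ha : a = 0
      · obtain ⟨m, r, hw, hr⟩ := ih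
        exact ⟨m + 1, r, by rw [List.replicate_succ, List.cons_append, ← hw, ha], hr⟩
      · exact ⟨0, a :: x, by simp, Or.inr ha⟩

lemma red_zero_cons {ℓ : ℕ} (hℓ : 1 ≤ ℓ) (w : List ℕ) :
    red ℓ (0 :: w) = red ℓ (0 :: red ℓ w) := by
  obtain ⟨m, r, hw, hr⟩ := exists_run_decomp w
  have hredw : red ℓ w = List.replicate (m % ℓ) 0 ++ red ℓ r := by
    rw [hw]; exact red_run hℓ m r hr
  have h1 : red ℓ (0 :: w) = List.replicate ((m + 1) % ℓ) 0 ++ red ℓ r := by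
    rw [hw, show (0 :: (List.replicate m (0:ℕ) ++ r)) = List.replicate (m+1) 0 ++ r by
      rw [List.replicate_succ]; rfl]
    exact red_run hℓ (m+1) r hr
  have h2 : red ℓ (0 :: red ℓ w) = List.replicate ((m % ℓ + 1) % ℓ) 0 ++ red ℓ (red ℓ r) := by
    rw [hredw, show (0 :: (List.replicate (m % ℓ) (0:ℕ) ++ red ℓ r))
        = List.replicate (m % ℓ + 1) 0 ++ red ℓ r by rw [List.replicate_succ]; rfl]
    exact red_run hℓ (m % ℓ + 1) (red ℓ r) (Z_red hr)
  rw [h1, h2, red_idem hℓ]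
  congr 2
  conv_lhs => rw [Nat.add_mod]
  conv_rhs => rw [Nat.add_mod]
  simp

lemma red_output {ℓ : ℕ} (hℓ : 1 ≤ ℓ) {u v : List ℕ} (h : IsOutputInf ℓ u v) :
    red ℓ v = red ℓ u := by
  induction h with
  | nil => rfl
  | @cons a c x y hx ih =>
      by_cases ha : a = 0
      · subst ha
        have h1 : (0 :: (List.replicate (c * ℓ) (0:ℕ) ++ y))
            = List.replicate (c * ℓ) 0 ++ (0 :: y) := by
          rw [show (0 :: (List.replicate (c * ℓ) (0:ℕ) ++ y))
              = List.replicate (c * ℓ + 1) 0 ++ y by rw [List.replicate_succ]; rfl,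
            show c * ℓ + 1 = c * ℓ + 1 from rfl]
          rw [List.replicate_add, List.replicate_one, List.append_assoc, List.singleton_append]
        rw [h1, red_rep_block hℓ, red_zero_cons hℓ, ih, ← red_zero_cons hℓ]
      · rw [red_cons_nz ha, red_cons_nz ha, red_rep_block hℓ, ih]

lemma pre_out {ℓ : ℕ} (hℓ : 1 ≤ ℓ) :
    ∀ x : List ℕ, ∃ c w, x = List.replicate (c * ℓ) 0 ++ w ∧ IsOutputInf ℓ (red ℓ x) w := by
  intro x
  induction x using red.induct ℓ with
  | case1 => exact ⟨0, [], by simp, by rw [red_nil]; exact .nil⟩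
  | case2 a x h ih =>
      obtain ⟨c, w, hx, hout⟩ := ih
      refine ⟨c + 1, w, ?_, ?_⟩
      · rw [block_cons_decomp hℓ h, hx,
          show (c + 1) * ℓ = ℓ + c * ℓ by rw [Nat.succ_mul]; omega,
          List.replicate_add, List.append_assoc]
      · rw [red_cons_pos h]; exact hout
  | case3 a x h ih =>
      obtain ⟨c, w, hx, hout⟩ := ih
      refine ⟨0, a :: x, by simp, ?_⟩
      rw [red_cons_neg h]
      have h2 := IsOutputInf.cons a c hout
      rwa [← hx] at h2

lemma output_red {ℓ : ℕ} (hℓ : 1 ≤ ℓ) {x : List ℕ} (hx : x ≠ []) (hh : x.headI ≠ 0) :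
    IsOutputInf ℓ (red ℓ x) x := by
  obtain ⟨c, w, hxe, hout⟩ := pre_out hℓ x
  have hc : c * ℓ = 0 := by
    by_contra hc
    have : x.headI = 0 := by
      rw [hxe]
      match h : c * ℓ, hc with
      | k + 1, _ => rw [List.replicate_succ]; rfl
    exact hh this
  rw [hc] at hxe
  simp at hxe
  rwa [← hxe] at hout

lemma mem_red {ℓ : ℕ} : ∀ {x : List ℕ} {b : ℕ}, b ∈ red ℓ x → b ∈ x := by
  intro x
  induction x using red.induct ℓ with
  | case1 => intro b hb; rw [red_nil] at hb; exact absurd hb (by simp)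
  | case2 a x h ih =>
      intro b hb
      rw [red_cons_pos h] at hb
      exact List.mem_cons_of_mem a (List.mem_of_mem_drop (ih hb))
  | case3 a x h ih =>
      intro b hb
      rw [red_cons_neg h] at hb
      rcases List.mem_cons.mp hb with h1 | h1
      · exact h1 ▸ (List.mem_cons_self : a ∈ a :: x)
      · exact List.mem_cons_of_mem a (ih h1)

lemma length_red {ℓ : ℕ} : ∀ x : List ℕ, (red ℓ x).length ≤ x.length := by
  intro x
  induction x using red.induct ℓ with
  | case1 => rw [red_nil]
  | case2 a x h ih =>
      rw [red_cons_pos h]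
      calc (red ℓ (x.drop (ℓ-1))).length ≤ (x.drop (ℓ-1)).length := ih
        _ ≤ (a :: x).length := by simp [List.length_cons]; omega
  | case3 a x h ih =>
      rw [red_cons_neg h]
      simpa using Nat.succ_le_succ ih

lemma red_mem_D {q ℓ n : ℕ} (hℓ : 1 ≤ ℓ) {x : List ℕ} (hx : x ∈ S q n) :
    red ℓ x ∈ D q ℓ n := by
  obtain ⟨hne, hlen, hmem, hhead⟩ := hx
  match x, hne with
  | a :: t, _ =>
      have ha : a ≠ 0 := hhead
      refine ⟨⟨?_, ?_, ?_, ?_⟩, not_infix_red hℓ _⟩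
      · rw [red_cons_nz ha]; simp
      · exact le_trans (length_red _) hlen
      · intro b hb; exact hmem b (mem_red hb)
      · rw [red_cons_nz ha]; exact ha

lemma D_finite (q ℓ n : ℕ) : (D q ℓ n).Finite := by
  have h1 : (D q ℓ n) ⊆ (fun l : List (Fin q) => l.map Fin.val) ''
      {l : List (Fin q) | l.length ≤ n} := by
    rintro x ⟨⟨hne, hlen, hmem, hh⟩, -⟩
    refine ⟨x.pmap (fun a h => (⟨a, h⟩ : Fin q)) hmem, by simpa using hlen, ?_⟩
    simp [List.map_pmap]
  exact Set.Finite.subset ((List.finite_length_le (Fin q) n).image _) h1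

/-- for every `n ≥ 1`, `D q ℓ n` is a zero-error code for the
(ℓ,∞)-0-insertion channel, and every zero-error code `Code ⊆ S q n` for this channel
satisfies `|Code| ≤ |D q ℓ n|`. -/
theorem stmt18 (q ℓ n : ℕ) (hq : 2 ≤ q) (hℓ : 1 ≤ ℓ) (hn : 1 ≤ n) :
    ZeroErrorCodeInf ℓ (D q ℓ n) ∧
    (∀ Code : Set (List ℕ), Code ⊆ S q n → ZeroErrorCodeInf ℓ Code →
      Code.ncard ≤ (D q ℓ n).ncard) := by
  constructor
  · rintro x hx y hy hne ⟨z, hxz, hyz⟩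
    have h1 := red_output hℓ hxz
    have h2 := red_output hℓ hyz
    have hxr : red ℓ x = x := red_eq_self hℓ x hx.2
    have hyr : red ℓ y = y := red_eq_self hℓ y hy.2
    exact hne (by rw [← hxr, ← hyr, ← h1, ← h2])
  · intro Code hsub hzec
    refine Set.ncard_le_ncard_of_injOn (red ℓ) ?_ ?_ (D_finite q ℓ n)
    · intro x hx; exact red_mem_D hℓ (hsub hx)
    · intro x hx y hy hred
      by_contra hne
      apply hzec x hx y hy hne
      obtain ⟨hxne, -, -, hxh⟩ := hsub hx
      obtain ⟨hyne, -, -, hyh⟩ := hsub hy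
      have h1 := output_red hℓ hxne hxh
      have h2 := output_red hℓ hyne hyh
      rw [← hred] at h2
      exact join h1 h2

end ZeroErrorDup
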